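/- Let f : ℝ → [0,∞) be a probability density and p ∈ (1,2]. With f₂ defined as f₂(u,v) = (2v − u²)^{−1/2} f((u + √(2v−u²))/2) f((u − √(2v−u²))/2) 1_{u² < 2v}, one has ∫_{ℝ²} f₂(u,v)^p du dv = ∫_{ℝ²} f(x)^p f(y)^p |y − x|^{1−p} dx dy. -/

import Mathlib

open MeasureTheory
open scoped ENNReal

noncomputable def Bder (q : ℝ × ℝ) : (ℝ × ℝ) →L[ℝ] (ℝ × ℝ) :=
  LinearMap.toContinuousLinearMap (Matrix.toLin (Module.Basis.finTwoProd ℝ) (Module.Basis.finTwoProd ℝ)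
    !![1, 1; 2 * q.1, 2 * q.2])

theorem hasFDerivAt_phi (q : ℝ × ℝ) :
    HasFDerivAt (fun q : ℝ × ℝ => (q.1 + q.2, q.1 ^ 2 + q.2 ^ 2)) (Bder q) q := by
  rw [Bder, Matrix.toLin_finTwoProd_toContinuousLinearMap]
  convert HasFDerivAt.prodMk (𝕜 := ℝ)
    (hasFDerivAt_fst.add hasFDerivAt_snd)
    (((hasDerivAt_pow 2 q.1).comp_hasFDerivAt q hasFDerivAt_fst).add
      ((hasDerivAt_pow 2 q.2).comp_hasFDerivAt q hasFDerivAt_snd)) using 2 <;>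
  first | rfl | simp [pow_one]

theorem Bder_det (q : ℝ × ℝ) : (Bder q).det = 2 * q.2 - 2 * q.1 := by
  simp only [Bder, LinearMap.det_toContinuousLinearMap, LinearMap.det_toLin,
    Matrix.det_fin_two_of]
  ring

theorem key_pointwise (f : ℝ → ℝ) (hf : ∀ z, 0 ≤ f z) (p : ℝ) (hp0 : 0 < p) (x y : ℝ)
    (hxy : y < x) :
    ENNReal.ofReal |2 * y - 2 * x| *
      ENNReal.ofReal (((2 * (x ^ 2 + y ^ 2) - (x + y) ^ 2) ^ (-(1 / 2 : ℝ)) *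
        f ((x + y + Real.sqrt (2 * (x ^ 2 + y ^ 2) - (x + y) ^ 2)) / 2) *
        f ((x + y - Real.sqrt (2 * (x ^ 2 + y ^ 2) - (x + y) ^ 2)) / 2)) ^ p) =
    ENNReal.ofReal (2 * (f x ^ p * f y ^ p * |y - x| ^ (1 - p))) := by
  have hd : 0 < x - y := sub_pos.2 hxy
  have e1 : 2 * (x ^ 2 + y ^ 2) - (x + y) ^ 2 = (x - y) ^ 2 := by ring
  rw [e1, Real.sqrt_sq hd.le]
  have e2 : (x + y + (x - y)) / 2 = x := by ring
  have e3 : (x + y - (x - y)) / 2 = y := by ring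
  rw [e2, e3]
  have e4 : ((x - y) ^ 2 : ℝ) ^ (-(1 / 2 : ℝ)) = (x - y) ^ (-1 : ℝ) := by
    rw [← Real.rpow_natCast (x - y) 2, ← Real.rpow_mul hd.le]
    norm_num
  rw [e4]
  have e5 : ((x - y) ^ (-1 : ℝ) * f x * f y) ^ p
      = (x - y) ^ (-p) * (f x ^ p * f y ^ p) := by
    rw [Real.mul_rpow (mul_nonneg (by positivity) (hf x)) (hf y),
      Real.mul_rpow (by positivity) (hf x), ← Real.rpow_mul hd.le]
    ring_nf
  rw [e5, ← ENNReal.ofReal_mul (abs_nonneg _)]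
  congr 1
  have e6 : |2 * y - 2 * x| = 2 * (x - y) := by
    rw [abs_of_neg (by linarith)]; ring
  have e7 : |y - x| = x - y := by
    rw [abs_of_neg (by linarith)]; ring
  have e8 : (x - y) * (x - y) ^ (-p) = (x - y) ^ (1 - p) := by
    nth_rewrite 1 [← Real.rpow_one (x - y)]
    rw [← Real.rpow_add hd]
    ring_nf
  rw [e6, e7, ← e8]
  ring

theorem lintegral_f2_rpow_eq (f : ℝ → ℝ) (hf_meas : Measurable f)
    (hf_nonneg : ∀ z, 0 ≤ f z)
    (hf_prob : ∫⁻ z, ENNReal.ofReal (f z) = 1)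
    (p : ℝ) (hp1 : 1 < p) (hp2 : p ≤ 2) :
    (∫⁻ q : ℝ × ℝ, ENNReal.ofReal
        ((if q.1 ^ 2 < 2 * q.2 then
            (2 * q.2 - q.1 ^ 2) ^ (-(1 / 2 : ℝ)) *
              f ((q.1 + Real.sqrt (2 * q.2 - q.1 ^ 2)) / 2) *
              f ((q.1 - Real.sqrt (2 * q.2 - q.1 ^ 2)) / 2)
          else 0) ^ p)) =
      ∫⁻ q : ℝ × ℝ, ENNReal.ofReal (f q.1 ^ p * f q.2 ^ p * |q.2 - q.1| ^ (1 - p)) := by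
  have hp0 : (0 : ℝ) < p := lt_trans one_pos hp1
  set φ : ℝ × ℝ → ℝ × ℝ := fun q => (q.1 + q.2, q.1 ^ 2 + q.2 ^ 2) with hφ
  set s : Set (ℝ × ℝ) := {q | q.2 < q.1} with hs
  have hs_meas : MeasurableSet s := measurableSet_lt measurable_snd measurable_fst
  have hT_meas : MeasurableSet {q : ℝ × ℝ | q.1 ^ 2 < 2 * q.2} :=
    measurableSet_lt (by fun_prop) (by fun_prop)
  have himg : φ '' s = {q : ℝ × ℝ | q.1 ^ 2 < 2 * q.2} := by
    ext ⟨u, v⟩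
    constructor
    · rintro ⟨⟨x, y⟩, hxy, h⟩
      rw [← h]
      simp only [hs, Set.mem_setOf_eq, hφ] at hxy ⊢
      nlinarith [sq_nonneg (x - y)]
    · intro huv
      simp only [Set.mem_setOf_eq] at huv
      have h2v : 0 < 2 * v - u ^ 2 := by linarith
      have hsq : Real.sqrt (2 * v - u ^ 2) ^ 2 = 2 * v - u ^ 2 := Real.sq_sqrt h2v.le
      refine ⟨((u + Real.sqrt (2 * v - u ^ 2)) / 2, (u - Real.sqrt (2 * v - u ^ 2)) / 2), ?_, ?_⟩
      · have : 0 < Real.sqrt (2 * v - u ^ 2) := Real.sqrt_pos.2 h2v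
        simp only [hs, Set.mem_setOf_eq]
        linarith
      · simp only [hφ, Prod.mk.injEq]
        constructor
        · ring
        · linear_combination hsq / 2
  have hinj : Set.InjOn φ s := by
    rintro ⟨x, y⟩ hxy ⟨x', y'⟩ hxy' h
    simp only [hs, Set.mem_setOf_eq] at hxy hxy'
    simp only [hφ, Prod.mk.injEq] at h
    obtain ⟨h1, h2⟩ := h
    have hab : (x - y) ^ 2 = (x' - y') ^ 2 := by
      linear_combination 2 * h2 - (x + y + x' + y') * h1
    have h4 : |x - y| = |x' - y'| := by
      rw [← Real.sqrt_sq_eq_abs, ← Real.sqrt_sq_eq_abs, hab]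
    rw [abs_of_pos (by linarith), abs_of_pos (by linarith)] at h4
    have h3 : x - y = x' - y' := h4
    rw [Prod.mk.injEq]
    constructor <;> linarith
  -- the symmetric-integrand function
  set H : ℝ × ℝ → ℝ≥0∞ :=
    fun q => ENNReal.ofReal (f q.1 ^ p * f q.2 ^ p * |q.2 - q.1| ^ (1 - p)) with hH
  have hswap : MeasurePreserving (Prod.swap : ℝ × ℝ → ℝ × ℝ) volume volume := by
    rw [Measure.volume_eq_prod]
    exact Measure.measurePreserving_swap
  have hdiag : volume {q : ℝ × ℝ | q.1 = q.2} = 0 := by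
    have hker : {q : ℝ × ℝ | q.1 = q.2} ⊆
        (LinearMap.ker (LinearMap.fst ℝ ℝ ℝ - LinearMap.snd ℝ ℝ ℝ) : Set (ℝ × ℝ)) := by
      intro q hq
      simp only [Set.mem_setOf_eq] at hq
      simp [LinearMap.mem_ker, hq]
    refine measure_mono_null hker (Measure.addHaar_submodule _ _ ?_)
    rw [Ne, LinearMap.ker_eq_top]
    intro h
    have : (LinearMap.fst ℝ ℝ ℝ - LinearMap.snd ℝ ℝ ℝ) (1, 0)
        = (0 : ℝ × ℝ →ₗ[ℝ] ℝ) (1, 0) := by rw [h]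
    simp at this
  calc
    (∫⁻ q : ℝ × ℝ, ENNReal.ofReal
        ((if q.1 ^ 2 < 2 * q.2 then
            (2 * q.2 - q.1 ^ 2) ^ (-(1 / 2 : ℝ)) *
              f ((q.1 + Real.sqrt (2 * q.2 - q.1 ^ 2)) / 2) *
              f ((q.1 - Real.sqrt (2 * q.2 - q.1 ^ 2)) / 2)
          else 0) ^ p))
      = ∫⁻ q in {q : ℝ × ℝ | q.1 ^ 2 < 2 * q.2}, ENNReal.ofReal
          (((2 * q.2 - q.1 ^ 2) ^ (-(1 / 2 : ℝ)) *
            f ((q.1 + Real.sqrt (2 * q.2 - q.1 ^ 2)) / 2) *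
            f ((q.1 - Real.sqrt (2 * q.2 - q.1 ^ 2)) / 2)) ^ p) := by
        rw [← lintegral_indicator hT_meas]
        refine lintegral_congr fun q => ?_
        by_cases hq : q.1 ^ 2 < 2 * q.2
        · rw [if_pos hq, Set.indicator_of_mem (show q ∈ {q : ℝ × ℝ | q.1 ^ 2 < 2 * q.2} from hq)]
        · rw [if_neg hq, Set.indicator_of_notMem (show q ∉ {q : ℝ × ℝ | q.1 ^ 2 < 2 * q.2} from hq), Real.zero_rpow (ne_of_gt hp0),
            ENNReal.ofReal_zero]
    _ = ∫⁻ q in s, ENNReal.ofReal |(Bder q).det| *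
          (fun q : ℝ × ℝ => ENNReal.ofReal
            (((2 * q.2 - q.1 ^ 2) ^ (-(1 / 2 : ℝ)) *
              f ((q.1 + Real.sqrt (2 * q.2 - q.1 ^ 2)) / 2) *
              f ((q.1 - Real.sqrt (2 * q.2 - q.1 ^ 2)) / 2)) ^ p)) (φ q) := by
        rw [← himg]
        exact lintegral_image_eq_lintegral_abs_det_fderiv_mul volume hs_meas
          (fun q _ => (hasFDerivAt_phi q).hasFDerivWithinAt) hinj _
    _ = ∫⁻ q in s, ENNReal.ofReal 2 * H q := by
        refine setLIntegral_congr_fun hs_meas (fun q hq => ?_)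
        simp only [hs, Set.mem_setOf_eq] at hq
        rw [Bder_det]
        have := key_pointwise f hf_nonneg p hp0 q.1 q.2 hq
        simp only [hφ, hH]
        rw [this, ENNReal.ofReal_mul (by norm_num)]
    _ = 2 * ∫⁻ q in s, H q := by
        rw [lintegral_const_mul' _ _ ENNReal.ofReal_ne_top]
        norm_num
    _ = ∫⁻ q : ℝ × ℝ, H q := by
        have hHswap : ∀ q : ℝ × ℝ, H (Prod.swap q) = H q := by
          intro q
          simp only [hH, Prod.fst_swap, Prod.snd_swap]
          rw [abs_sub_comm]
          ring_nf
        have hpre : (Prod.swap : ℝ × ℝ → ℝ × ℝ) ⁻¹' s = {q : ℝ × ℝ | q.1 < q.2} := rfl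
        have hs' : ∫⁻ q in {q : ℝ × ℝ | q.1 < q.2}, H q = ∫⁻ q in s, H q := by
          rw [← hpre, ← hswap.setLIntegral_comp_preimage_emb
            (MeasurableEquiv.prodComm : ℝ × ℝ ≃ᵐ ℝ × ℝ).measurableEmbedding H s]
          exact lintegral_congr fun q => (hHswap q).symm
        have hcompl : ∫⁻ q in sᶜ, H q = ∫⁻ q in {q : ℝ × ℝ | q.1 < q.2}, H q := by
          refine setLIntegral_congr (MeasureTheory.ae_eq_set.2 ⟨?_, ?_⟩)
          · refine measure_mono_null ?_ hdiag
            intro q hq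
            simp only [Set.mem_diff, Set.mem_compl_iff, hs, Set.mem_setOf_eq, not_lt] at hq ⊢
            exact le_antisymm hq.1 hq.2
          · refine measure_mono_null ?_ hdiag
            intro q hq
            simp only [Set.mem_diff, Set.mem_compl_iff, hs, Set.mem_setOf_eq, not_lt,
              not_le] at hq
            exact absurd hq.2 (not_lt.2 hq.1.le)
        conv_rhs => rw [← lintegral_add_compl _ hs_meas]
        rw [hcompl, hs', two_mul]
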